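/- For βγ > 1 and x > 0, the key inequality (βx+1)(x+γ) − d(βγ−1)x ≥ (√β·x − √γ)² holds when d = Δ_c = (√(βγ)+1)/(√(βγ)−1); that is, (βx+1)(x+γ) − Δ_c(βγ−1)x = (√β·x − √γ)². -/
import Mathlib

theorem stmt_8 (β γ x : ℝ) (hβ : 0 < β) (hγ : 0 < γ) (h1 : 1 < β * γ) (hx : 0 < x) :
    (β * x + 1) * (x + γ) -
        (Real.sqrt (β * γ) + 1) / (Real.sqrt (β * γ) - 1) * (β * γ - 1) * x =
      (Real.sqrt β * x - Real.sqrt γ) ^ 2 := by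
  have hs : Real.sqrt (β * γ) = Real.sqrt β * Real.sqrt γ := Real.sqrt_mul hβ.le γ
  have hsq : Real.sqrt (β * γ) ^ 2 = β * γ := Real.sq_sqrt (by positivity)
  have hb : Real.sqrt β ^ 2 = β := Real.sq_sqrt hβ.le
  have hg : Real.sqrt γ ^ 2 = γ := Real.sq_sqrt hγ.le
  have h2 : 1 < Real.sqrt (β * γ) := by
    have := Real.sqrt_lt_sqrt (by norm_num) h1
    simpa using this
  have hne : Real.sqrt (β * γ) - 1 ≠ 0 := by linarith
  have hfac : β * γ - 1 = (Real.sqrt (β * γ) - 1) * (Real.sqrt (β * γ) + 1) := by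
    nlinarith [hsq]
  have key : (Real.sqrt (β * γ) + 1) / (Real.sqrt (β * γ) - 1) * (β * γ - 1)
      = (Real.sqrt (β * γ) + 1) ^ 2 := by
    rw [hfac, div_mul_eq_mul_div, mul_comm (Real.sqrt (β * γ) - 1), mul_div_assoc, mul_div_assoc, div_self hne, mul_one, sq]
  rw [key]
  linear_combination (-x^2)*hb - hg - x*hsq - 2*x*hs
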